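/- Let S be a finite nonempty set, κ a Markov kernel on S, and s₀ ∈ S. Assume every state of S is reachable from s₀ in the digraph of κ and that the digraph of κ has a unique BSCC. Then for all subsets F, G ⊆ S, the P_{s₀}-probability of the set of trajectories ω such that ω_n ∈ F for infinitely many n and ω_n ∈ G for only finitely many n is either 0 or 1. -/

import Mathlib

open MeasureTheory Filter
open scoped ENNReal

/-- The edge relation of the digraph of the Markov kernel `κ`: there is an
edge `(a, b)` whenever `κ a` assigns positive probability to `b`. -/
def kerEdge {S : Type*} (κ : S → PMF S) (a b : S) : Prop :=
  κ a b ≠ 0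

/-- Reachability in the digraph of `κ`: a directed path of edges. -/
def kerReach {S : Type*} (κ : S → PMF S) : S → S → Prop :=
  Relation.ReflTransGen (kerEdge κ)

/-- `B` is a BSCC of the digraph of `κ`: it is nonempty, any two of its states
are mutually reachable, it is closed under edges, and it is a full
mutual-reachability class. -/
def IsBSCC {S : Type*} (κ : S → PMF S) (B : Set S) : Prop :=
  B.Nonempty ∧
  (∀ a ∈ B, ∀ b ∈ B, kerReach κ a b) ∧
  (∀ a ∈ B, ∀ b, kerEdge κ a b → b ∈ B) ∧
  (∀ a ∈ B, ∀ b, kerReach κ a b → kerReach κ b a → b ∈ B)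

namespace ZeroOneAux

/-- indicator of a proposition, valued in `ℝ≥0∞`. -/
noncomputable def ind (p : Prop) : ℝ≥0∞ := by classical exact if p then 1 else 0

lemma ind_true {p : Prop} (h : p) : ind p = 1 := by simp [ind, h]
lemma ind_false {p : Prop} (h : ¬ p) : ind p = 0 := by simp [ind, h]
lemma ind_le_one (p : Prop) : ind p ≤ 1 := by
  by_cases h : p <;> simp [ind, h]
lemma ind_ne_top (p : Prop) : ind p ≠ ⊤ := by
  by_cases h : p <;> simp [ind, h]

set_option linter.unusedSectionVars false

lemma kappa_sum {S : Type*} [Fintype S] (κ : S → PMF S) (s : S) :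
    ∑ t, (κ s) t = 1 := by
  rw [← tsum_fintype (L := .unconditional _)]; exact (κ s).tsum_coe

variable {S : Type*} [Fintype S] [Nonempty S] [DecidableEq S]

/-- value function for time-inhomogeneous avoidance: probability that the
chain started at `s` at time `j` satisfies `A` at times `j, …, j+k`. -/
noncomputable def Vq (κ : S → PMF S) (A : ℕ → S → Prop) : ℕ → ℕ → S → ℝ≥0∞
  | 0, j, s => ind (A j s)
  | (k+1), j, s => ind (A j s) * ∑ t, (κ s) t * Vq κ A k (j+1) t

/-- probability of avoiding `T` for `k` steps starting at `s`. -/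
noncomputable def Qf (κ : S → PMF S) (T : Set S) : ℕ → S → ℝ≥0∞
  | 0, s => ind (s ∉ T)
  | (k+1), s => ind (s ∉ T) * ∑ t, (κ s) t * Qf κ T k t

variable (κ : S → PMF S) {T : Set S}

lemma Qf_le_one : ∀ (k : ℕ) (s : S), Qf κ T k s ≤ 1
  | 0, s => ind_le_one _
  | (k+1), s => by
      calc ind (s ∉ T) * ∑ t, (κ s) t * Qf κ T k t
          ≤ 1 * ∑ t, (κ s) t * 1 := by
            gcongr
            · exact ind_le_one _
            · exact Qf_le_one k _
        _ = 1 := by simp [kappa_sum]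

lemma Qf_mem {s : S} (h : s ∈ T) : ∀ k, Qf κ T k s = 0
  | 0 => by simp [Qf, ind_false (not_not_intro h)]
  | (k+1) => by simp [Qf, ind_false (not_not_intro h)]

lemma Qf_succ_le : ∀ (k : ℕ) (s : S), Qf κ T (k+1) s ≤ Qf κ T k s
  | 0, s => by
      calc ind (s ∉ T) * ∑ t, (κ s) t * Qf κ T 0 t
          ≤ ind (s ∉ T) * ∑ t, (κ s) t * 1 := by gcongr; exact Qf_le_one κ 0 _
        _ = Qf κ T 0 s := by simp [kappa_sum, Qf]
  | (k+1), s => by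
      show ind (s ∉ T) * ∑ t, (κ s) t * Qf κ T (k+1) t
          ≤ ind (s ∉ T) * ∑ t, (κ s) t * Qf κ T k t
      gcongr
      exact Qf_succ_le k _

lemma Qf_anti {m n : ℕ} (h : m ≤ n) (s : S) : Qf κ T n s ≤ Qf κ T m s := by
  induction n with
  | zero => simp_all
  | succ n ih =>
      rcases Nat.lt_or_ge m (n+1) with h' | h'
      · exact (Qf_succ_le κ n s).trans (ih (by omega))
      · have : m = n + 1 := by omega
        simp [this]

lemma Qf_add_le {c : ℝ≥0∞} {b : ℕ} (hc : ∀ t, Qf κ T b t ≤ c) :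
    ∀ (a : ℕ) (s : S), Qf κ T (a + b) s ≤ Qf κ T a s * c
  | 0, s => by
      by_cases h : s ∈ T
      · simp [Qf_mem κ h]
      · simpa [Qf, ind_true h] using hc s
  | (a+1), s => by
      have : a + 1 + b = (a + b) + 1 := by omega
      rw [this]
      show ind (s ∉ T) * ∑ t, (κ s) t * Qf κ T (a+b) t ≤ _
      calc ind (s ∉ T) * ∑ t, (κ s) t * Qf κ T (a+b) t
          ≤ ind (s ∉ T) * ∑ t, (κ s) t * (Qf κ T a t * c) := by
            gcongr with t; exact Qf_add_le hc a t
        _ = (ind (s ∉ T) * ∑ t, (κ s) t * Qf κ T a t) * c := by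
            rw [mul_assoc, Finset.sum_mul]
            congr 1
            exact Finset.sum_congr rfl fun t _ => by ring
        _ = Qf κ T (a+1) s * c := rfl

lemma Qf_reach_lt_one {s b : S} (hb : b ∈ T) (h : kerReach κ s b) :
    ∃ n, Qf κ T n s < 1 := by
  induction h using Relation.ReflTransGen.head_induction_on with
  | refl =>
      exact ⟨0, by simp [Qf, ind_false (not_not_intro hb)]⟩
  | @head a c h' htail ih =>
      obtain ⟨n, hn⟩ := ih
      by_cases hs : a ∈ T
      · exact ⟨0, by simp [Qf, ind_false (not_not_intro hs)]⟩
      · refine ⟨n + 1, ?_⟩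
        show ind (a ∉ T) * ∑ t, (κ a) t * Qf κ T n t < 1
        rw [ind_true hs, one_mul]
        have hfin : (∑ t ∈ Finset.univ.erase c, (κ a) t * Qf κ T n t) ≠ ⊤ := by
          refine ne_top_of_le_ne_top (by simp : (1:ℝ≥0∞) ≠ ⊤) ?_
          calc ∑ t ∈ Finset.univ.erase c, (κ a) t * Qf κ T n t
              ≤ ∑ t, (κ a) t * Qf κ T n t :=
                Finset.sum_le_sum_of_subset (Finset.erase_subset _ _)
            _ ≤ ∑ t, (κ a) t * 1 := by gcongr with t; exact Qf_le_one κ n t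
            _ = 1 := by simp [kappa_sum]
        calc ∑ t, (κ a) t * Qf κ T n t
            = (κ a) c * Qf κ T n c + ∑ t ∈ Finset.univ.erase c, (κ a) t * Qf κ T n t :=
              (Finset.add_sum_erase _ _ (Finset.mem_univ c)).symm
          _ < (κ a) c * 1 + ∑ t ∈ Finset.univ.erase c, (κ a) t * Qf κ T n t := by
              refine ENNReal.add_lt_add_right hfin ?_
              exact (ENNReal.mul_lt_mul_iff_right h' ((κ a).apply_ne_top c)).mpr hn
          _ ≤ (κ a) c * 1 + ∑ t ∈ Finset.univ.erase c, (κ a) t * 1 := by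
              gcongr with t; exact Qf_le_one κ n t
          _ = ∑ t, (κ a) t := by
              simp only [mul_one]
              exact Finset.add_sum_erase _ _ (Finset.mem_univ c)
          _ = 1 := kappa_sum κ a

lemma Qf_decay (hT : ∀ s : S, ∃ b ∈ T, kerReach κ s b) :
    ∃ (L : ℕ) (c : ℝ≥0∞), 0 < L ∧ c < 1 ∧ ∀ (n : ℕ) (s : S), Qf κ T n s ≤ c ^ (n / L) := by
  have key : ∀ s : S, ∃ n, Qf κ T n s < 1 := by
    intro s
    obtain ⟨b, hb, hr⟩ := hT s
    exact Qf_reach_lt_one κ hb hr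
  choose nn hn using key
  set L := (Finset.univ.sup nn) + 1 with hLdef
  have hL : ∀ s, Qf κ T L s < 1 := fun s =>
    lt_of_le_of_lt (Qf_anti κ (Nat.le_succ_of_le (Finset.le_sup (Finset.mem_univ s))) s) (hn s)
  set c := Finset.univ.sup' Finset.univ_nonempty (Qf κ T L) with hcdef
  have hc1 : c < 1 := (Finset.sup'_lt_iff Finset.univ_nonempty).mpr fun s _ => hL s
  have hcb : ∀ t, Qf κ T L t ≤ c := fun t => Finset.le_sup' _ (Finset.mem_univ t)
  have hpow : ∀ (k : ℕ) (s : S), Qf κ T (k * L) s ≤ c ^ k := by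
    intro k
    induction k with
    | zero => intro s; simpa using Qf_le_one κ 0 s
    | succ k ih =>
        intro s
        have h1 : (k + 1) * L = k * L + L := by ring
        rw [h1, pow_succ]
        exact (Qf_add_le κ hcb (k * L) s).trans (mul_le_mul' (ih s) le_rfl)
  refine ⟨L, c, Nat.succ_pos _, hc1, fun n s => ?_⟩
  calc Qf κ T n s ≤ Qf κ T (n / L * L) s := Qf_anti κ (Nat.div_mul_le_self n L) s
    _ ≤ c ^ (n / L) := hpow _ s

lemma ind_congr {p q : Prop} (h : p ↔ q) : ind p = ind q := by
  by_cases hp : p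
  · rw [ind_true hp, ind_true (h.1 hp)]
  · rw [ind_false hp, ind_false (fun hq => hp (h.2 hq))]

lemma Vq_eq_Qf {A : ℕ → S → Prop} (T : Set S) :
    ∀ (k j : ℕ) (s : S), (∀ i u, j ≤ i → (A i u ↔ u ∉ T)) → Vq κ A k j s = Qf κ T k s
  | 0, j, s, h => ind_congr (h j s le_rfl)
  | (k+1), j, s, h => by
      show ind (A j s) * ∑ t, (κ s) t * Vq κ A k (j+1) t
          = ind (s ∉ T) * ∑ t, (κ s) t * Qf κ T k t
      rw [ind_congr (h j s le_rfl)]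
      congr 1
      refine Finset.sum_congr rfl fun t _ => ?_
      rw [Vq_eq_Qf T k (j+1) t (fun i u hi => h i u (by omega))]

lemma Vq_window {T : Set S} {m K : ℕ} {c : ℝ≥0∞} (hc : ∀ t, Qf κ T K t ≤ c) :
    ∀ (a j : ℕ) (s : S), j + a = m →
      Vq κ (fun i u => m ≤ i → u ∉ T) (a + K) j s ≤ c
  | 0, j, s, hj => by
      have hj' : j = m := by omega
      subst hj'
      rw [zero_add, Vq_eq_Qf (κ := κ) (A := fun i u => j ≤ i → u ∉ T) T K j s
        (fun i u hi => ⟨fun h => h (by omega), fun h _ => h⟩)]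
      exact hc s
  | (a+1), j, s, hj => by
      have h1 : a + 1 + K = (a + K) + 1 := by omega
      rw [h1]
      show ind (m ≤ j → s ∉ T) * ∑ t, (κ s) t * Vq κ _ (a + K) (j+1) t ≤ c
      rw [ind_true (fun hmj => absurd hmj (by omega)), one_mul]
      calc ∑ t, (κ s) t * Vq κ _ (a + K) (j+1) t
          ≤ ∑ t, (κ s) t * c := by
            gcongr with t ht
            exact Vq_window hc a (j+1) t (by omega)
        _ = c := by rw [← Finset.sum_mul, kappa_sum, one_mul]

lemma Vq_end_zero {B : Set S} (hcl : ∀ a ∈ B, ∀ b, kerEdge κ a b → b ∈ B) (n : ℕ) :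
    ∀ (k j : ℕ) (s : S), j + k = n → s ∈ B →
      Vq κ (fun i u => i = n → u ∉ B) k j s = 0
  | 0, j, s, hj, hs => by
      have : j = n := by omega
      subst this
      exact ind_false (fun h => (h rfl) hs)
  | (k+1), j, s, hj, hs => by
      show ind _ * ∑ t, (κ s) t * Vq κ _ k (j+1) t = 0
      have hz : ∑ t, (κ s) t * Vq κ (fun i u => i = n → u ∉ B) k (j+1) t = 0 := by
        refine Finset.sum_eq_zero fun t _ => ?_
        by_cases ht : (κ s) t = 0
        · rw [ht, zero_mul]
        · rw [Vq_end_zero hcl n k (j+1) t (by omega) (hcl s hs t ht), mul_zero]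
      rw [hz, mul_zero]

lemma Vq_end_le {B : Set S} (hcl : ∀ a ∈ B, ∀ b, kerEdge κ a b → b ∈ B) (n : ℕ) :
    ∀ (k j : ℕ) (s : S), j + k = n →
      Vq κ (fun i u => i = n → u ∉ B) k j s ≤ Qf κ B k s
  | 0, j, s, hj => by
      have : j = n := by omega
      subst this
      exact le_of_eq (ind_congr ⟨fun h => h rfl, fun h _ => h⟩)
  | (k+1), j, s, hj => by
      by_cases hs : s ∈ B
      · rw [Vq_end_zero κ hcl n (k+1) j s hj hs]
        exact zero_le
      · show ind _ * ∑ t, (κ s) t * Vq κ _ k (j+1) t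
            ≤ ind (s ∉ B) * ∑ t, (κ s) t * Qf κ B k t
        rw [ind_true (fun _ => hs), ind_true hs, one_mul, one_mul]
        gcongr with t ht
        exact Vq_end_le hcl n k (j+1) t (by omega)

lemma ind_and (p q : Prop) : ind (p ∧ q) = ind p * ind q := by
  by_cases hp : p
  · by_cases hq : q
    · rw [ind_true ⟨hp, hq⟩, ind_true hp, ind_true hq, one_mul]
    · rw [ind_false (fun h => hq h.2), ind_false hq, mul_zero]
  · rw [ind_false (fun h => hp h.1), ind_false hp, zero_mul]

lemma sum_ind_eq (s : S) (f : S → ℝ≥0∞) : ∑ t, ind (t = s) * f t = f s := by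
  rw [Finset.sum_eq_single_of_mem s (Finset.mem_univ s)
    (fun t _ ht => by rw [ind_false ht, zero_mul])]
  rw [ind_true rfl, one_mul]

lemma sum_ind_eq' (s : S) (f : S → ℝ≥0∞) : ∑ t, ind (s = t) * f t = f s := by
  rw [Finset.sum_eq_single_of_mem s (Finset.mem_univ s)
    (fun t _ ht => by rw [ind_false (fun h => ht h.symm), zero_mul])]
  rw [ind_true rfl, one_mul]

lemma sum_fiber {k : ℕ} (F : S → ℝ≥0∞) (c : (Fin (k+1) → S) → ℝ≥0∞) :
    ∑ v : Fin (k+1) → S, F (v 0) * c v = ∑ t, F t * ∑ v, ind (v 0 = t) * c v := by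
  have : ∀ t : S, F t * ∑ v, ind (v 0 = t) * c v
      = ∑ v : Fin (k+1) → S, ind (v 0 = t) * (F t * c v) := by
    intro t
    rw [Finset.mul_sum]
    exact Finset.sum_congr rfl fun v _ => by ring
  simp_rw [this]
  rw [Finset.sum_comm]
  refine Finset.sum_congr rfl fun v _ => ?_
  exact (sum_ind_eq' (v 0) fun u => F u * c v).symm

lemma sum_paths (A : ℕ → S → Prop) :
    ∀ (k j : ℕ) (s : S),
      (∑ g : Fin (k+1) → S,
        ind (g 0 = s ∧ ∀ i : Fin (k+1), A (j + (i : ℕ)) (g i)) *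
          ∏ i : Fin k, (κ (g i.castSucc)) (g i.succ))
      = Vq κ A k j s
  | 0, j, s => by
      have h1 : ∀ g : Fin 1 → S,
          ind (g 0 = s ∧ ∀ i : Fin 1, A (j + (i : ℕ)) (g i)) *
            ∏ i : Fin 0, (κ (g i.castSucc)) (g i.succ)
          = (fun t => ind (t = s) * ind (A j t)) (g 0) := by
        intro g
        simp only [Finset.univ_eq_empty, Finset.prod_empty, mul_one]
        rw [show (∀ i : Fin 1, A (j + (i : ℕ)) (g i)) ↔ A j (g 0) from
          ⟨fun h => by simpa using h 0, fun h i => by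
            have : i = 0 := Subsingleton.elim i 0
            subst this; simpa using h⟩]
        exact ind_and _ _
      calc (∑ g : Fin 1 → S,
          ind (g 0 = s ∧ ∀ i : Fin 1, A (j + (i : ℕ)) (g i)) *
            ∏ i : Fin 0, (κ (g i.castSucc)) (g i.succ))
          = ∑ g : Fin 1 → S, (fun t => ind (t = s) * ind (A j t)) (g 0) :=
            Finset.sum_congr rfl fun g _ => h1 g
        _ = ∑ t : S, ind (t = s) * ind (A j t) := by
            rw [← Equiv.sum_comp (Equiv.funUnique (Fin 1) S)
              (fun t => ind (t = s) * ind (A j t))]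
            rfl
        _ = ind (A j s) := sum_ind_eq s _
        _ = Vq κ A 0 j s := rfl
  | (k+1), j, s => by
      have step : ∀ (a : S) (v : Fin (k+1) → S),
          (ind ((Fin.cons a v : Fin (k+2) → S) 0 = s ∧ ∀ i : Fin (k+2), A (j + (i : ℕ)) ((Fin.cons a v : Fin (k+2) → S) i)) *
            ∏ i : Fin (k+1), (κ ((Fin.cons a v : Fin (k+2) → S) i.castSucc)) ((Fin.cons a v : Fin (k+2) → S) i.succ))
          = ind (a = s) * (ind (A j a) *
              ((κ a) (v 0) *
                (ind (∀ i : Fin (k+1), A ((j+1) + (i : ℕ)) (v i)) *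
                  ∏ i : Fin k, (κ (v i.castSucc)) (v i.succ)))) := by
        intro a v
        have hcond : ((Fin.cons a v : Fin (k+2) → S) 0 = s ∧ ∀ i : Fin (k+2), A (j + (i : ℕ)) ((Fin.cons a v : Fin (k+2) → S) i))
            ↔ (a = s ∧ (A j a ∧ ∀ i : Fin (k+1), A ((j+1) + (i : ℕ)) (v i))) := by
          rw [Fin.cons_zero]
          constructor
          · rintro ⟨h0, hall⟩
            refine ⟨h0, by simpa using hall 0, fun i => ?_⟩
            have h2 := hall i.succ
            rw [Fin.cons_succ] at h2
            have he : j + ((i.succ : Fin (k+2)) : ℕ) = (j+1) + (i : ℕ) := by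
              rw [Fin.val_succ]; omega
            rwa [he] at h2
          · rintro ⟨h0, hA, hall⟩
            refine ⟨h0, fun i => ?_⟩
            induction i using Fin.cases with
            | zero => simpa using hA
            | succ i =>
                rw [Fin.cons_succ]
                have he : j + ((i.succ : Fin (k+2)) : ℕ) = (j+1) + (i : ℕ) := by
                  rw [Fin.val_succ]; omega
                rw [he]
                exact hall i
        have hprod : (∏ i : Fin (k+1), (κ ((Fin.cons a v : Fin (k+2) → S) i.castSucc)) ((Fin.cons a v : Fin (k+2) → S) i.succ))
            = (κ a) (v 0) * ∏ i : Fin k, (κ (v i.castSucc)) (v i.succ) := by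
          rw [Fin.prod_univ_succ]
          simp only [Fin.castSucc_zero, Fin.cons_zero, ← Fin.succ_castSucc, Fin.cons_succ]
        rw [ind_congr hcond, ind_and, ind_and, hprod]
        ring
      calc (∑ g : Fin (k+2) → S,
            ind (g 0 = s ∧ ∀ i : Fin (k+2), A (j + (i : ℕ)) (g i)) *
              ∏ i : Fin (k+1), (κ (g i.castSucc)) (g i.succ))
          = ∑ a : S, ∑ v : Fin (k+1) → S,
              (ind ((Fin.cons a v : Fin (k+2) → S) 0 = s ∧ ∀ i : Fin (k+2), A (j + (i : ℕ)) ((Fin.cons a v : Fin (k+2) → S) i)) *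
                ∏ i : Fin (k+1), (κ ((Fin.cons a v : Fin (k+2) → S) i.castSucc)) ((Fin.cons a v : Fin (k+2) → S) i.succ)) := by
            rw [← Equiv.sum_comp (Fin.consEquiv fun _ => S)
              (fun g : Fin (k+2) → S =>
                ind (g 0 = s ∧ ∀ i : Fin (k+2), A (j + (i : ℕ)) (g i)) *
                  ∏ i : Fin (k+1), (κ (g i.castSucc)) (g i.succ)),
              Fintype.sum_prod_type]
            rfl
        _ = ∑ a : S, ind (a = s) * (ind (A j a) * ∑ v : Fin (k+1) → S,
              (κ a) (v 0) *
                (ind (∀ i : Fin (k+1), A ((j+1) + (i : ℕ)) (v i)) *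
                  ∏ i : Fin k, (κ (v i.castSucc)) (v i.succ))) := by
            refine Finset.sum_congr rfl fun a _ => ?_
            rw [Finset.mul_sum, Finset.mul_sum]
            exact Finset.sum_congr rfl fun v _ => step a v
        _ = ind (A j s) * ∑ v : Fin (k+1) → S,
              (κ s) (v 0) *
                (ind (∀ i : Fin (k+1), A ((j+1) + (i : ℕ)) (v i)) *
                  ∏ i : Fin k, (κ (v i.castSucc)) (v i.succ)) :=
            sum_ind_eq s _
        _ = ind (A j s) * ∑ t, (κ s) t * ∑ v : Fin (k+1) → S,
              ind (v 0 = t) *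
                (ind (∀ i : Fin (k+1), A ((j+1) + (i : ℕ)) (v i)) *
                  ∏ i : Fin k, (κ (v i.castSucc)) (v i.succ)) := by
            rw [sum_fiber]
        _ = ind (A j s) * ∑ t, (κ s) t * Vq κ A k (j+1) t := by
            congr 1
            refine Finset.sum_congr rfl fun t _ => ?_
            congr 1
            calc (∑ v : Fin (k+1) → S,
                  ind (v 0 = t) *
                    (ind (∀ i : Fin (k+1), A ((j+1) + (i : ℕ)) (v i)) *
                      ∏ i : Fin k, (κ (v i.castSucc)) (v i.succ)))
                = ∑ v : Fin (k+1) → S,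
                    ind (v 0 = t ∧ ∀ i : Fin (k+1), A ((j+1) + (i : ℕ)) (v i)) *
                      ∏ i : Fin k, (κ (v i.castSucc)) (v i.succ) := by
                  refine Finset.sum_congr rfl fun v _ => ?_
                  rw [ind_and, mul_assoc]
              _ = Vq κ A k (j+1) t := sum_paths A k (j+1) t
        _ = Vq κ A (k+1) j s := rfl

lemma ind_eq_ite (p : Prop) [Decidable p] : (if p then (1:ℝ≥0∞) else 0) = ind p := by
  by_cases h : p
  · rw [if_pos h, ind_true h]
  · rw [if_neg h, ind_false h]

section MeasurePart

variable [MeasurableSpace S] [MeasurableSingletonClass S]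

lemma P_forall (κ : S → PMF S) (s₀ : S) (P : Measure (ℕ → S))
    (hP : ∀ (k : ℕ) (f : ℕ → S),
      P {ω | ∀ i ≤ k, ω i = f i} =
        (if f 0 = s₀ then 1 else 0) * ∏ i ∈ Finset.range k, (κ (f i)) (f (i + 1)))
    (A : ℕ → S → Prop) (k : ℕ) :
    P {ω | ∀ i ≤ k, A i (ω i)} = Vq κ A k 0 s₀ := by
  classical
  set Cyl : (Fin (k+1) → S) → Set (ℕ → S) :=
    fun g => {ω | ∀ i : Fin (k+1), ω i = g i} with hCylDef
  have hCylMeas : ∀ g, MeasurableSet (Cyl g) := by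
    intro g
    have he : Cyl g = ⋂ i : Fin (k+1), (fun ω : ℕ → S => ω (i : ℕ)) ⁻¹' {g i} := by
      ext ω; simp [hCylDef, Set.mem_iInter]
    rw [he]
    exact MeasurableSet.iInter fun i =>
      (measurable_pi_apply (i : ℕ)) (measurableSet_singleton (g i))
  have hCylP : ∀ g, P (Cyl g) =
      ind (g 0 = s₀) * ∏ i : Fin k, (κ (g i.castSucc)) (g i.succ) := by
    intro g
    have hf := hP k (fun n => g ⟨min n k, by omega⟩)
    have hset : {ω : ℕ → S | ∀ i ≤ k, ω i = g ⟨min i k, by omega⟩} = Cyl g := by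
      ext ω
      constructor
      · intro h i
        have h2 := h (i : ℕ) (Fin.is_le i)
        have h3 : (⟨min (i : ℕ) k, by omega⟩ : Fin (k+1)) = i :=
          Fin.ext (by simp [Nat.min_eq_left (Fin.is_le i)])
        rw [h3] at h2
        exact h2
      · intro h i hi
        have h2 := h ⟨i, by omega⟩
        have h3 : (⟨min i k, by omega⟩ : Fin (k+1)) = ⟨i, by omega⟩ :=
          Fin.ext (by simp [Nat.min_eq_left hi])
        rw [h3]
        exact h2
    rw [hset] at hf
    rw [hf]
    congr 1
    · have h0 : (⟨min 0 k, by omega⟩ : Fin (k+1)) = 0 := Fin.ext (by simp)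
      rw [h0, ind_eq_ite]
    · rw [← Fin.prod_univ_eq_prod_range
        (fun n => (κ (g ⟨min n k, by omega⟩)) (g ⟨min (n+1) k, by omega⟩)) k]
      refine Finset.prod_congr rfl fun i _ => ?_
      have h1 : (⟨min (i : ℕ) k, by omega⟩ : Fin (k+1)) = i.castSucc :=
        Fin.ext (by simp [Nat.min_eq_left (le_of_lt i.isLt)])
      have h2 : (⟨min ((i : ℕ) + 1) k, by omega⟩ : Fin (k+1)) = i.succ :=
        Fin.ext (by simp [Nat.min_eq_left i.isLt])
      rw [h1, h2]
  set D : (Fin (k+1) → S) → Set (ℕ → S) :=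
    fun g => if (∀ i : Fin (k+1), A (i : ℕ) (g i)) then Cyl g else ∅ with hDDef
  have hUnion : {ω : ℕ → S | ∀ i ≤ k, A i (ω i)} = ⋃ g, D g := by
    ext ω
    simp only [Set.mem_setOf_eq, Set.mem_iUnion, hDDef]
    constructor
    · intro h
      refine ⟨fun i => ω (i : ℕ), ?_⟩
      show ω ∈ if (∀ i : Fin (k+1), A (i : ℕ) (ω (i : ℕ))) then
          Cyl (fun i => ω (i : ℕ)) else ∅
      rw [if_pos (fun i : Fin (k+1) => h (i : ℕ) (Fin.is_le i))]
      exact fun i => rfl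
    · rintro ⟨g, hg⟩
      by_cases hc : ∀ i : Fin (k+1), A (i : ℕ) (g i)
      · rw [if_pos hc] at hg
        intro i hi
        have h2 : ω i = g ⟨i, by omega⟩ := hg ⟨i, by omega⟩
        rw [h2]
        exact hc ⟨i, by omega⟩
      · rw [if_neg hc] at hg
        exact absurd hg (Set.notMem_empty ω)
  have hDMeas : ∀ g, MeasurableSet (D g) := fun g => by
    simp only [hDDef]
    split_ifs
    · exact hCylMeas g
    · exact MeasurableSet.empty
  have hDisj : Pairwise (Function.onFun Disjoint D) := by
    intro g g' hgg'
    refine Set.disjoint_left.mpr fun {ω} hg hg' => ?_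
    have h1 : ω ∈ Cyl g := by
      simp only [hDDef] at hg; split_ifs at hg
      · exact hg
      · exact absurd hg (Set.notMem_empty ω)
    have h2 : ω ∈ Cyl g' := by
      simp only [hDDef] at hg'; split_ifs at hg'
      · exact hg'
      · exact absurd hg' (Set.notMem_empty ω)
    exact hgg' (funext fun i => (h1 i).symm.trans (h2 i))
  calc P {ω : ℕ → S | ∀ i ≤ k, A i (ω i)} = P (⋃ g, D g) := by rw [hUnion]
    _ = ∑' g, P (D g) := measure_iUnion hDisj hDMeas
    _ = ∑ g, P (D g) := tsum_fintype _
    _ = ∑ g : Fin (k+1) → S, ind (g 0 = s₀ ∧ ∀ i : Fin (k+1), A (0 + (i : ℕ)) (g i)) *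
          ∏ i : Fin k, (κ (g i.castSucc)) (g i.succ) := by
        refine Finset.sum_congr rfl fun g _ => ?_
        simp only [hDDef]
        by_cases hc : ∀ i : Fin (k+1), A (i : ℕ) (g i)
        · have hX : ∀ i : Fin (k+1), A (0 + (i : ℕ)) (g i) := by simpa using hc
          rw [if_pos hc, hCylP g, ind_and, ind_true hX, mul_one]
        · rw [if_neg hc, measure_empty, ind_false (fun h => hc (by simpa using h.2)), zero_mul]
    _ = Vq κ A k 0 s₀ := sum_paths κ A k 0 s₀

end MeasurePart

lemma exists_bscc (κ : S → PMF S) (s : S) :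
    ∃ B : Set S, IsBSCC κ B ∧ ∃ t ∈ B, kerReach κ s t := by
  classical
  set R : Finset S := Finset.univ.filter (fun u => kerReach κ s u) with hR
  have hsR : s ∈ R := by simp [hR]; exact Relation.ReflTransGen.refl
  obtain ⟨t, htR, htmin⟩ := Finset.exists_min_image R
    (fun u => (Finset.univ.filter (fun v => kerReach κ u v)).card) ⟨s, hsR⟩
  have hst : kerReach κ s t := by
    rw [hR] at htR; simpa using htR
  refine ⟨{u | kerReach κ t u},
    ⟨⟨t, Relation.ReflTransGen.refl⟩, ?_, ?_, ?_⟩, t, Relation.ReflTransGen.refl, hst⟩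
  · intro a ha b hb
    have ha' : kerReach κ t a := ha
    have hb' : kerReach κ t b := hb
    have haR : a ∈ R := by
      rw [hR]; simp; exact hst.trans ha'
    have hsub : Finset.univ.filter (fun v => kerReach κ a v)
        ⊆ Finset.univ.filter (fun v => kerReach κ t v) := by
      intro v hv
      simp only [Finset.mem_filter, Finset.mem_univ, true_and] at hv ⊢
      exact ha'.trans hv
    have heq := Finset.eq_of_subset_of_card_le hsub (htmin a haR)
    have hat : kerReach κ a t := by
      have h2 : t ∈ Finset.univ.filter (fun v => kerReach κ a v) := by
        rw [heq]; simp; exact Relation.ReflTransGen.refl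
      simpa using h2
    exact hat.trans hb'
  · intro a ha b hedge
    exact Relation.ReflTransGen.tail ha hedge
  · intro a ha b hab _
    exact (ha : kerReach κ t a).trans hab

end ZeroOneAux


/-- Let `κ` be a Markov kernel on a finite nonempty set `S`,
`s₀ ∈ S`, and let `P` be the law on trajectory space of the Markov chain
started at `s₀` with kernel `κ`. If every state is reachable from `s₀` and the
digraph of `κ` has a unique BSCC, then for all `F G ⊆ S` the probability of
the set of trajectories visiting `F` infinitely often and `G` only finitely
often is either `0` or `1`. -/
theorem zero_one_law_rabin {S : Type*} [Fintype S] [Nonempty S] [DecidableEq S]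
    [MeasurableSpace S] [MeasurableSingletonClass S]
    (κ : S → PMF S) (s₀ : S)
    (P : Measure (ℕ → S)) [IsProbabilityMeasure P]
    (hP : ∀ (k : ℕ) (f : ℕ → S),
      P {ω | ∀ i ≤ k, ω i = f i} =
        (if f 0 = s₀ then 1 else 0) * ∏ i ∈ Finset.range k, κ (f i) (f (i + 1)))
    (hreach : ∀ s : S, kerReach κ s₀ s)
    (huniq : ∃! B : Set S, IsBSCC κ B) :
    ∀ F G : Set S,
      P {ω | {n : ℕ | ω n ∈ F}.Infinite ∧ {n : ℕ | ω n ∈ G}.Finite} = 0 ∨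
      P {ω | {n : ℕ | ω n ∈ F}.Infinite ∧ {n : ℕ | ω n ∈ G}.Finite} = 1 := by
  classical
  obtain ⟨B, hB, hBuniq⟩ := huniq
  have hclosed : ∀ a ∈ B, ∀ b, kerEdge κ a b → b ∈ B := hB.2.2.1
  have hBall : ∀ s : S, ∃ b ∈ B, kerReach κ s b := by
    intro s
    obtain ⟨B', hB', t, ht, hr⟩ := ZeroOneAux.exists_bscc κ s
    exact ⟨t, (hBuniq B' hB') ▸ ht, hr⟩
  have hBreach : ∀ b ∈ B, ∀ s, kerReach κ s b := by
    intro b hb s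
    obtain ⟨b', hb', hr⟩ := hBall s
    exact hr.trans (hB.2.1 b' hb' b hb)
  -- (D1) any set meeting `B` is visited infinitely often a.s.
  have D1 : ∀ T : Set S, (T ∩ B).Nonempty → P {ω | {n : ℕ | ω n ∈ T}.Finite} = 0 := by
    rintro T ⟨b, hbT, hbB⟩
    have hT : ∀ s : S, ∃ u ∈ T, kerReach κ s u := fun s => ⟨b, hbT, hBreach b hbB s⟩
    obtain ⟨L, c, hL, hc1, hdec⟩ := ZeroOneAux.Qf_decay κ hT
    have hm : ∀ m : ℕ, P {ω | ∀ n, m ≤ n → ω n ∉ T} = 0 := by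
      intro m
      have hb2 : ∀ jj : ℕ, P {ω | ∀ n, m ≤ n → ω n ∉ T} ≤ c ^ jj := by
        intro jj
        have hKL : jj * L / L = jj := Nat.mul_div_cancel jj hL
        have hcK : ∀ t, ZeroOneAux.Qf κ T (jj * L) t ≤ c ^ jj := fun t => by
          have := hdec (jj * L) t
          rwa [hKL] at this
        calc P {ω | ∀ n, m ≤ n → ω n ∉ T}
            ≤ P {ω | ∀ i ≤ m + jj * L, (fun i (u : S) => m ≤ i → u ∉ T) i (ω i)} := by
              refine measure_mono fun ω hω i _ hmi => hω i hmi
          _ = ZeroOneAux.Vq κ (fun i (u : S) => m ≤ i → u ∉ T) (m + jj * L) 0 s₀ :=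
              ZeroOneAux.P_forall κ s₀ P hP (fun i (u : S) => m ≤ i → u ∉ T) (m + jj * L)
          _ ≤ c ^ jj := ZeroOneAux.Vq_window κ hcK m 0 s₀ (by omega)
      refine le_antisymm ?_ zero_le
      exact ge_of_tendsto' (ENNReal.tendsto_pow_atTop_nhds_zero_of_lt_one hc1) hb2
    have hsub : {ω : ℕ → S | {n : ℕ | ω n ∈ T}.Finite}
        ⊆ ⋃ m : ℕ, {ω | ∀ n, m ≤ n → ω n ∉ T} := by
      intro ω hω
      obtain ⟨m, hm'⟩ := hω.bddAbove
      refine Set.mem_iUnion.mpr ⟨m + 1, fun n hn hnT => ?_⟩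
      have := hm' hnT
      omega
    refine le_antisymm ?_ zero_le
    calc P {ω | {n : ℕ | ω n ∈ T}.Finite}
        ≤ P (⋃ m : ℕ, {ω | ∀ n, m ≤ n → ω n ∉ T}) := measure_mono hsub
      _ ≤ ∑' m : ℕ, P {ω | ∀ n, m ≤ n → ω n ∉ T} := measure_iUnion_le _
      _ = 0 := by simp [hm]
  -- (D2) states outside `B` are visited finitely often a.s.
  have D2 : P {ω | {n : ℕ | ω n ∉ B}.Infinite} = 0 := by
    obtain ⟨L, c, hL, hc1, hdec⟩ := ZeroOneAux.Qf_decay κ hBall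
    have hEn : ∀ n : ℕ, P {ω : ℕ → S | ω n ∉ B} ≤ c ^ (n / L) := by
      intro n
      have h1 : {ω : ℕ → S | ω n ∉ B}
          = {ω | ∀ i ≤ n, (fun i (u : S) => i = n → u ∉ B) i (ω i)} := by
        ext ω
        simp only [Set.mem_setOf_eq]
        constructor
        · intro h i _ he
          subst he; exact h
        · intro h
          exact h n le_rfl rfl
      rw [h1, ZeroOneAux.P_forall κ s₀ P hP (fun i (u : S) => i = n → u ∉ B) n]
      calc ZeroOneAux.Vq κ (fun i (u : S) => i = n → u ∉ B) n 0 s₀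
          ≤ ZeroOneAux.Qf κ B n s₀ := ZeroOneAux.Vq_end_le κ hclosed n n 0 s₀ (by omega)
        _ ≤ c ^ (n / L) := hdec n s₀
    have hsum : (∑' n : ℕ, P {ω : ℕ → S | ω n ∉ B}) ≠ ⊤ := by
      have : NeZero L := ⟨by omega⟩
      have hle : (∑' n : ℕ, P {ω : ℕ → S | ω n ∉ B}) ≤ ∑' n : ℕ, c ^ (n / L) :=
        ENNReal.tsum_le_tsum hEn
      have h2 : (∑' n : ℕ, c ^ (n / L)) = (L : ℝ≥0∞) * (1 - c)⁻¹ := by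
        rw [← Equiv.tsum_eq (Nat.divModEquiv L).symm (fun n => c ^ (n / L))]
        have h3 : ∀ p : ℕ × Fin L,
            c ^ (((Nat.divModEquiv L).symm p : ℕ) / L) = c ^ p.1 := by
          rintro ⟨k, r⟩
          have : (k * L + (r : ℕ)) / L = k := by
            rw [mul_comm, Nat.mul_add_div hL, Nat.div_eq_of_lt r.isLt, add_zero]
          simp only [Nat.divModEquiv, Equiv.coe_fn_symm_mk]
          rw [this]
        calc (∑' p : ℕ × Fin L, c ^ (((Nat.divModEquiv L).symm p : ℕ) / L))
            = ∑' p : ℕ × Fin L, c ^ p.1 := by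
              exact tsum_congr h3
          _ = ∑' k : ℕ, ∑' _ : Fin L, c ^ k :=
              ENNReal.tsum_prod (f := fun a (_ : Fin L) => c ^ a)
          _ = ∑' k : ℕ, (L : ℝ≥0∞) * c ^ k := by
              refine tsum_congr fun k => ?_
              rw [tsum_fintype]
              simp [Finset.sum_const, nsmul_eq_mul]
          _ = (L : ℝ≥0∞) * ∑' k : ℕ, c ^ k := ENNReal.tsum_mul_left
          _ = (L : ℝ≥0∞) * (1 - c)⁻¹ := by rw [ENNReal.tsum_geometric]
      refine ne_top_of_le_ne_top ?_ (hle.trans h2.le)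
      exact ENNReal.mul_ne_top (ENNReal.natCast_ne_top L)
        (ENNReal.inv_ne_top.mpr (tsub_pos_of_lt hc1).ne')
    have hae := MeasureTheory.ae_finite_setOf_mem (μ := P)
      (s := fun n : ℕ => {ω : ℕ → S | ω n ∉ B}) hsum
    rw [MeasureTheory.ae_iff] at hae
    refine le_antisymm (le_trans (measure_mono ?_) hae.le) zero_le
    intro ω hω
    exact hω
  -- assembly
  intro F G
  by_cases hFB : (F ∩ B).Nonempty
  · by_cases hGB : (G ∩ B).Nonempty
    · left
      refine le_antisymm ?_ zero_le
      calc P {ω | {n : ℕ | ω n ∈ F}.Infinite ∧ {n : ℕ | ω n ∈ G}.Finite}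
          ≤ P {ω | {n : ℕ | ω n ∈ G}.Finite} := measure_mono fun ω hω => hω.2
        _ = 0 := D1 G hGB
    · right
      have hGzero : P {ω | {n : ℕ | ω n ∈ G}.Infinite} = 0 := by
        refine le_antisymm ?_ zero_le
        calc P {ω | {n : ℕ | ω n ∈ G}.Infinite}
            ≤ P {ω | {n : ℕ | ω n ∉ B}.Infinite} := by
              refine measure_mono fun ω hω => hω.mono fun n hn hB' => ?_
              exact hGB ⟨ω n, hn, hB'⟩
          _ = 0 := D2
      have hFzero : P {ω | {n : ℕ | ω n ∈ F}.Finite} = 0 := D1 F hFB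
      have h1 : (1 : ℝ≥0∞) ≤
          P {ω | {n : ℕ | ω n ∈ F}.Infinite ∧ {n : ℕ | ω n ∈ G}.Finite} := by
        have hcover : (Set.univ : Set (ℕ → S)) ⊆
            {ω | {n : ℕ | ω n ∈ F}.Infinite ∧ {n : ℕ | ω n ∈ G}.Finite} ∪
              ({ω | {n : ℕ | ω n ∈ F}.Finite} ∪ {ω | {n : ℕ | ω n ∈ G}.Infinite}) := by
          intro ω _
          by_cases h1 : {n : ℕ | ω n ∈ F}.Infinite
          · by_cases h2 : {n : ℕ | ω n ∈ G}.Finite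
            · exact Or.inl ⟨h1, h2⟩
            · exact Or.inr (Or.inr h2)
          · exact Or.inr (Or.inl (Set.not_infinite.mp h1))
        calc (1 : ℝ≥0∞) = P Set.univ := measure_univ.symm
          _ ≤ P ({ω | {n : ℕ | ω n ∈ F}.Infinite ∧ {n : ℕ | ω n ∈ G}.Finite} ∪
              ({ω | {n : ℕ | ω n ∈ F}.Finite} ∪ {ω | {n : ℕ | ω n ∈ G}.Infinite})) :=
            measure_mono hcover
          _ ≤ P {ω | {n : ℕ | ω n ∈ F}.Infinite ∧ {n : ℕ | ω n ∈ G}.Finite} +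
              P ({ω | {n : ℕ | ω n ∈ F}.Finite} ∪ {ω | {n : ℕ | ω n ∈ G}.Infinite}) :=
            measure_union_le _ _
          _ ≤ P {ω | {n : ℕ | ω n ∈ F}.Infinite ∧ {n : ℕ | ω n ∈ G}.Finite} +
              (P {ω | {n : ℕ | ω n ∈ F}.Finite} + P {ω | {n : ℕ | ω n ∈ G}.Infinite}) := by
            gcongr
            exact measure_union_le _ _
          _ = P {ω | {n : ℕ | ω n ∈ F}.Infinite ∧ {n : ℕ | ω n ∈ G}.Finite} := by
            rw [hFzero, hGzero]; simp
      exact le_antisymm prob_le_one h1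
  · left
    refine le_antisymm ?_ zero_le
    calc P {ω | {n : ℕ | ω n ∈ F}.Infinite ∧ {n : ℕ | ω n ∈ G}.Finite}
        ≤ P {ω | {n : ℕ | ω n ∉ B}.Infinite} := by
          refine measure_mono fun ω hω => hω.1.mono fun n hn hB' => ?_
          exact hFB ⟨ω n, hn, hB'⟩
      _ = 0 := D2
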